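/- Let b ≥ 2 be an integer, G a b-dc-semigroup, j a non-negative integer and l a positive integer such that I_b(j,l) ⊆ G. Assume also that b > 2 or j + l ≥ 2. Then for every positive integer q, I_b(q·j, q·l) ⊆ G. -/

import Mathlib

/-- `Ib b i k` is the set of integers `x` with `b^i ≤ x < b^(i+k)`. -/
def Ib (b i k : ℕ) : Set ℕ := {x : ℕ | b ^ i ≤ x ∧ x < b ^ (i + k)}

/-- A set `G` of positive integers is a `b`-dc-semigroup if it is closed under
multiplication and closed with respect to the number of base-`b` digits. -/
def IsDCSemigroup (b : ℕ) (G : Set ℕ) : Prop :=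
  (∀ x ∈ G, 0 < x) ∧
  (∀ x ∈ G, ∀ y ∈ G, x * y ∈ G) ∧
  (∀ x ∈ G, ∀ y : ℕ, 0 < y → Nat.log b y = Nat.log b x → y ∈ G)

theorem stmt_4 (b : ℕ) (hb : 2 ≤ b) (G : Set ℕ) (hG : IsDCSemigroup b G)
    (j l : ℕ) (hl : 0 < l) (hIb : Ib b j l ⊆ G)
    (hcase : 2 < b ∨ 2 ≤ j + l) :
    ∀ q : ℕ, 0 < q → Ib b (q * j) (q * l) ⊆ G := by
  obtain ⟨hpos, hmul, hdig⟩ := hG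
  have hb1 : 1 < b := hb
  have hbpos : ∀ i : ℕ, 0 < b ^ i := fun i => Nat.pow_pos (n := i) (by omega)
  -- digit closure: if b^i ∈ G then the whole class [b^i, b^(i+1)) is in G
  have L1 : ∀ i, b ^ i ∈ G → ∀ x, b ^ i ≤ x → x < b ^ (i + 1) → x ∈ G := by
    intro i hi x hx1 hx2
    refine hdig _ hi x (lt_of_lt_of_le (hbpos i) hx1) ?_
    rw [Nat.log_pow hb1]
    exact Nat.log_eq_of_pow_le_of_lt_pow hx1 hx2
  have L2 : ∀ a c, b ^ a ∈ G → b ^ c ∈ G → b ^ (a + c) ∈ G := by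
    intro a c ha hc
    have := hmul _ ha _ hc
    rwa [← pow_add] at this
  have L3 : ∀ a c, (2 < b ∨ (1 ≤ a ∧ 1 ≤ c)) → b ^ a ∈ G → b ^ c ∈ G →
      b ^ (a + c + 1) ∈ G := by
    intro a c hcond ha hc
    have hA := hbpos a
    have hC := hbpos c
    have hAlt : b ^ a < b ^ (a + 1) := Nat.pow_lt_pow_right hb1 (by omega)
    have hClt : b ^ c < b ^ (c + 1) := Nat.pow_lt_pow_right hb1 (by omega)
    have hxA : b ^ (a + 1) - 1 ∈ G := L1 a ha _ (by omega) (by omega)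
    have hxC : b ^ (c + 1) - 1 ∈ G := L1 c hc _ (by omega) (by omega)
    have hxy := hmul _ hxA _ hxC
    have hupper : (b ^ (a + 1) - 1) * (b ^ (c + 1) - 1) < b ^ (a + c + 2) := by
      have : (b ^ (a + 1) - 1) * (b ^ (c + 1) - 1) < b ^ (a + 1) * b ^ (c + 1) :=
        Nat.mul_lt_mul_of_lt_of_lt (by omega) (by omega)
      calc (b ^ (a + 1) - 1) * (b ^ (c + 1) - 1) < b ^ (a + 1) * b ^ (c + 1) := this
        _ = b ^ (a + c + 2) := by ring
    have hlower : b ^ (a + c + 1) ≤ (b ^ (a + 1) - 1) * (b ^ (c + 1) - 1) := by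
      have ea : b ^ (a + 1) = b * b ^ a := by ring
      have ec : b ^ (c + 1) = b * b ^ c := by ring
      have et : b ^ (a + c + 1) = b * (b ^ a * b ^ c) := by ring
      rw [ea, ec, et]
      have h1 : 1 ≤ b * b ^ a := by nlinarith
      have h2 : 1 ≤ b * b ^ c := by nlinarith
      zify [h1, h2]
      rcases hcond with h3 | ⟨ha1, hc1⟩
      · have hb3 : (3 : ℤ) ≤ (b : ℤ) := by exact_mod_cast h3
        have hA' : (1 : ℤ) ≤ (b : ℤ) ^ a := by exact_mod_cast hA
        have hC' : (1 : ℤ) ≤ (b : ℤ) ^ c := by exact_mod_cast hC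
        nlinarith [mul_le_mul hA' hC' (by linarith) (by linarith : (0:ℤ) ≤ (b:ℤ)^a)]
      · have hAb : b ≤ b ^ a := Nat.le_self_pow (by omega) b
        have hCb : b ≤ b ^ c := Nat.le_self_pow (by omega) b
        have hA' : (2 : ℤ) ≤ (b : ℤ) ^ a := by
          have : (b:ℤ) ≤ (b:ℤ) ^ a := by exact_mod_cast hAb
          have : (2:ℤ) ≤ (b:ℤ) := by exact_mod_cast hb
          omega
        have hC' : (2 : ℤ) ≤ (b : ℤ) ^ c := by
          have : (b:ℤ) ≤ (b:ℤ) ^ c := by exact_mod_cast hCb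
          have : (2:ℤ) ≤ (b:ℤ) := by exact_mod_cast hb
          omega
        have hb2 : (2 : ℤ) ≤ (b : ℤ) := by exact_mod_cast hb
        nlinarith [mul_nonneg (by linarith : (0:ℤ) ≤ (b:ℤ)^a - 2) (by linarith : (0:ℤ) ≤ (b:ℤ)^c - 2),
          mul_nonneg (mul_nonneg (by linarith : (0:ℤ) ≤ (b:ℤ) - 2) (by linarith : (0:ℤ) ≤ (b:ℤ)^a)) (by linarith : (0:ℤ) ≤ (b:ℤ)^c),
          mul_nonneg (mul_nonneg (by linarith : (0:ℤ) ≤ (b:ℤ)) (by linarith : (0:ℤ) ≤ (b:ℤ)^a - 1)) (by linarith : (0:ℤ) ≤ (b:ℤ)^c - 1)]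
    refine hdig _ hxy _ (hbpos _) ?_
    rw [Nat.log_pow hb1, Nat.log_eq_of_pow_le_of_lt_pow hlower hupper]
  -- base classes
  have base : ∀ a, j ≤ a → a < j + l → b ^ a ∈ G := by
    intro a h1 h2
    exact hIb ⟨Nat.pow_le_pow_right (by omega) h1, Nat.pow_lt_pow_right hb1 h2⟩
  -- key induction
  have key : ∀ q, 1 ≤ q → ∀ i, q * j ≤ i → i < q * j + q * l → b ^ i ∈ G := by
    intro q hq
    induction q, hq using Nat.le_induction with
    | base => simpa using base
    | succ q hq ih =>
      have e1 : (q + 1) * j = q * j + j := by ring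
      have e2 : (q + 1) * l = q * l + l := by ring
      have hJK : j + l ≤ q * j + q * l := by
        calc j + l = 1 * j + 1 * l := by ring
          _ ≤ q * j + q * l := by
            exact Nat.add_le_add (Nat.mul_le_mul_right j hq) (Nat.mul_le_mul_right l hq)
      intro i h1 h2
      rw [e1] at h1
      rw [e1, e2] at h2
      have hK1 : 1 ≤ q * l := Nat.one_le_iff_ne_zero.mpr (by positivity)
      by_cases hsmall : i + 2 ≤ j + l + (q * j) + (q * l)
      · have hsum : i = (i - min (q * j + q * l - 1) (i - j))
            + min (q * j + q * l - 1) (i - j) := by omega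
        rw [hsum]
        refine L2 _ _ (base _ (by omega) (by omega)) (ih _ (by omega) (by omega))
      · have hieq : i = (j + l - 1) + (q * j + q * l - 1) + 1 := by omega
        rw [hieq]
        refine L3 _ _ ?_ (base _ (by omega) (by omega)) (ih _ (by omega) (by omega))
        rcases hcase with h | h
        · exact Or.inl h
        · exact Or.inr ⟨by omega, by omega⟩
  intro q hq x hx
  obtain ⟨hx1, hx2⟩ := hx
  have hx0 : 0 < x := lt_of_lt_of_le (hbpos _) hx1
  have hlog1 : q * j ≤ Nat.log b x := (Nat.le_log_iff_pow_le hb1 (by omega)).mpr hx1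
  have hlog2 : Nat.log b x < q * j + q * l := (Nat.log_lt_iff_lt_pow hb1 (by omega)).mpr hx2
  exact L1 _ (key q hq _ hlog1 hlog2) x (Nat.pow_log_le_self b (by omega))
    (Nat.lt_pow_succ_log_self hb1 x)
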